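/- Let s_1, …, s_n : ℝ^d → ℝ be twice continuously differentiable, let j ∈ {1,…,n}, fix z ∈ ℝ^d, and suppose the values s_1(z), …, s_n(z) have a unique maximizer k* with k* ≠ j. For β > 0 let H(β) denote the Hessian matrix at z of the InfoNCE loss ℓ_β(z) = log( Σ_k exp(β s_k(z)) ) - β s_j(z), and let H_k denote the Hessian of s_k at z. Then (1/β) H(β) → H_{k*} - H_j as β → ∞; consequently, if H_{k*} ≠ H_j, then ‖H(β)‖/β converges to ‖H_{k*} - H_j‖ > 0, i.e. the dominant curvature of the loss landscape at a suboptimal configuration scales linearly in β (Hessian sharpening). -/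

import Mathlib

open Real Finset Filter

attribute [local instance] Matrix.normedAddCommGroup
attribute [local instance] Matrix.normedSpace

/-- The `(a,b)` entry of the Hessian matrix of `f : ℝ^d → ℝ` at `z`, i.e. the second
partial derivative `∂_a ∂_b f (z)` along the standard basis vectors. -/
noncomputable def hessianEntry {d : ℕ} (f : EuclideanSpace ℝ (Fin d) → ℝ)
    (z : EuclideanSpace ℝ (Fin d)) (a b : Fin d) : ℝ :=
  fderiv ℝ (fun w => fderiv ℝ f w (EuclideanSpace.single b 1)) z (EuclideanSpace.single a 1)

/-- The Hessian matrix of `f : ℝ^d → ℝ` at `z`. -/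
noncomputable def hessianMatrix {d : ℕ} (f : EuclideanSpace ℝ (Fin d) → ℝ)
    (z : EuclideanSpace ℝ (Fin d)) : Matrix (Fin d) (Fin d) ℝ :=
  Matrix.of fun a b => hessianEntry f z a b

set_option maxHeartbeats 2000000 in
/-- For `C²` functions `s_1, …, s_n : ℝ^d → ℝ`, index `j`, a point `z`,
and a unique maximizer `k* ≠ j` of the values `s_k(z)`, the Hessian `H(β)` at `z` of the
InfoNCE loss `ℓ_β(z) = log(Σ_k exp(β s_k(z))) - β s_j(z)` satisfies
`(1/β) H(β) → H_{k*} - H_j` as `β → ∞` (entrywise); consequently, if `H_{k*} ≠ H_j`,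
then `‖H(β)‖/β → ‖H_{k*} - H_j‖ > 0`, i.e. the dominant curvature at a suboptimal
configuration scales linearly in `β` (Hessian sharpening). -/
theorem infoNCE_hessian_sharpening
    (d n : ℕ) (hn : 1 ≤ n)
    (s : Fin n → EuclideanSpace ℝ (Fin d) → ℝ)
    (hs : ∀ k, ContDiff ℝ 2 (s k))
    (j kstar : Fin n) (hkj : kstar ≠ j) (z : EuclideanSpace ℝ (Fin d))
    (hks : ∀ k, k ≠ kstar → s k z < s kstar z)
    (ℓ : ℝ → EuclideanSpace ℝ (Fin d) → ℝ)
    (hℓ : ∀ β w, ℓ β w = Real.log (∑ k, Real.exp (β * s k w)) - β * s j w) :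
    (∀ a b : Fin d,
      Tendsto (fun β : ℝ => (1 / β) * hessianEntry (ℓ β) z a b) atTop
        (nhds (hessianEntry (s kstar) z a b - hessianEntry (s j) z a b)))
    ∧ (hessianMatrix (s kstar) z ≠ hessianMatrix (s j) z →
        Tendsto (fun β : ℝ => ‖hessianMatrix (ℓ β) z‖ / β) atTop
          (nhds ‖hessianMatrix (s kstar) z - hessianMatrix (s j) z‖)
        ∧ 0 < ‖hessianMatrix (s kstar) z - hessianMatrix (s j) z‖) := by
  have hnd : ∀ k, Differentiable ℝ (s k) := fun k => (hs k).differentiable (by norm_num)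
  have hnonempty : Nonempty (Fin n) := ⟨j⟩
  have hgpos : ∀ (β : ℝ) (w), 0 < ∑ k, Real.exp (β * s k w) := fun β w =>
    Finset.sum_pos (fun k _ => Real.exp_pos _) Finset.univ_nonempty
  have hne : ∀ β : ℝ, (∑ i, Real.exp (β * s i z)) ≠ 0 := fun β => (hgpos β z).ne'
  have hterm : ∀ (β : ℝ) (w) (k : Fin n), HasFDerivAt (fun w => Real.exp (β * s k w))
      ((Real.exp (β * s k w) * β) • fderiv ℝ (s k) w) w := by
    intro β w k
    have h1 : HasFDerivAt (fun w => β * s k w) (β • fderiv ℝ (s k) w) w :=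
      ((hnd k w).hasFDerivAt).const_mul β
    have h2 := h1.exp
    rwa [smul_smul] at h2
  have hgsum : ∀ (β : ℝ) (w), HasFDerivAt (fun w => ∑ k, Real.exp (β * s k w))
      (∑ k, (Real.exp (β * s k w) * β) • fderiv ℝ (s k) w) w := fun β w =>
    HasFDerivAt.fun_sum fun k _ => hterm β w k
  have hD1 : ∀ (β : ℝ) (w),
      HasFDerivAt (ℓ β)
        ((∑ k, Real.exp (β * s k w))⁻¹ •
            (∑ k, (Real.exp (β * s k w) * β) • fderiv ℝ (s k) w)
          - β • fderiv ℝ (s j) w) w := by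
    intro β w
    have hlog := (hgsum β w).log (ne_of_gt (hgpos β w))
    have hj' : HasFDerivAt (fun w => β * s j w) (β • fderiv ℝ (s j) w) w :=
      ((hnd j w).hasFDerivAt).const_mul β
    have h := hlog.sub hj'
    have heq : ℓ β = fun w => Real.log (∑ k, Real.exp (β * s k w)) - β * s j w :=
      funext fun w => hℓ β w
    rw [heq]; exact h
  have hgrad : ∀ (β : ℝ) (w) (b : Fin d), fderiv ℝ (ℓ β) w (EuclideanSpace.single b 1)
      = (∑ k, Real.exp (β * s k w))⁻¹ *
          (∑ k, (Real.exp (β * s k w) * β) * fderiv ℝ (s k) w (EuclideanSpace.single b 1))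
        - β * fderiv ℝ (s j) w (EuclideanSpace.single b 1) := by
    intro β w b
    rw [(hD1 β w).fderiv]
    simp [ContinuousLinearMap.sub_apply, ContinuousLinearMap.smul_apply,
      ContinuousLinearMap.sum_apply, smul_eq_mul]
  -- quantitative limits for the softmax weights
  have hbp : ∀ k : Fin n, k ≠ kstar →
      Tendsto (fun β : ℝ => β * (Real.exp (β * s k z) / ∑ i, Real.exp (β * s i z)))
        atTop (nhds 0) := by
    intro k hk
    have hcpos : 0 < s kstar z - s k z := sub_pos.mpr (hks k hk)
    have hupper : Tendsto (fun β : ℝ => β * Real.exp (β * (s k z - s kstar z))) atTop (nhds 0) := by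
      have h1 : Tendsto (fun x : ℝ => x * Real.exp (-x)) atTop (nhds 0) := by
        simpa using tendsto_pow_mul_exp_neg_atTop_nhds_zero 1
      have h2 : Tendsto (fun β : ℝ => (s kstar z - s k z) * β) atTop atTop :=
        Tendsto.const_mul_atTop hcpos tendsto_id
      have h3 := (h1.comp h2).const_mul (1 / (s kstar z - s k z))
      have heq : ∀ β : ℝ, (1 / (s kstar z - s k z)) *
          (((s kstar z - s k z) * β) * Real.exp (-((s kstar z - s k z) * β)))
          = β * Real.exp (β * (s k z - s kstar z)) := by
        intro β
        have h4 : -((s kstar z - s k z) * β) = β * (s k z - s kstar z) := by ring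
        rw [h4]
        field_simp
      rw [mul_zero] at h3
      exact h3.congr heq
    refine tendsto_of_tendsto_of_tendsto_of_le_of_le' tendsto_const_nhds hupper ?_ ?_
    · filter_upwards [eventually_ge_atTop (0:ℝ)] with β hβ
      have := (hgpos β z)
      positivity
    · filter_upwards [eventually_ge_atTop (0:ℝ)] with β hβ
      have hple : Real.exp (β * s k z) / ∑ i, Real.exp (β * s i z)
          ≤ Real.exp (β * (s k z - s kstar z)) := by
        have h5 : Real.exp (β * s kstar z) ≤ ∑ i, Real.exp (β * s i z) :=
          Finset.single_le_sum (f := fun i => Real.exp (β * s i z))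
            (fun i _ => (Real.exp_pos _).le) (Finset.mem_univ kstar)
        have h6 : Real.exp (β * s k z) / ∑ i, Real.exp (β * s i z)
            ≤ Real.exp (β * s k z) / Real.exp (β * s kstar z) :=
          div_le_div_of_nonneg_left (Real.exp_pos _).le (Real.exp_pos _) h5
        rwa [← Real.exp_sub, ← mul_sub] at h6
      exact mul_le_mul_of_nonneg_left hple hβ
  have hp0 : ∀ k : Fin n, k ≠ kstar →
      Tendsto (fun β : ℝ => Real.exp (β * s k z) / ∑ i, Real.exp (β * s i z))
        atTop (nhds 0) := by
    intro k hk
    have h1 := (hbp k hk).div_atTop tendsto_id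
    refine h1.congr' ?_
    filter_upwards [eventually_ne_atTop (0:ℝ)] with β hβ
    simp only [id]
    rw [mul_comm, mul_div_assoc, div_self hβ, mul_one]
  have hPsum : ∀ β : ℝ, ∑ k, Real.exp (β * s k z) / (∑ i, Real.exp (β * s i z)) = 1 := by
    intro β
    rw [← Finset.sum_div, div_self (hne β)]
  have hpstar : Tendsto (fun β : ℝ => Real.exp (β * s kstar z) / ∑ i, Real.exp (β * s i z))
      atTop (nhds 1) := by
    have hsum : ∀ β : ℝ, Real.exp (β * s kstar z) / (∑ i, Real.exp (β * s i z))
        = 1 - ∑ k ∈ Finset.univ.erase kstar, Real.exp (β * s k z) / (∑ i, Real.exp (β * s i z)) := by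
      intro β
      have h1 := hPsum β
      rw [← Finset.add_sum_erase _ _ (Finset.mem_univ kstar)] at h1
      linarith
    have h2 : Tendsto (fun β : ℝ =>
        1 - ∑ k ∈ Finset.univ.erase kstar, Real.exp (β * s k z) / (∑ i, Real.exp (β * s i z)))
        atTop (nhds (1 - ∑ k ∈ Finset.univ.erase kstar, (0:ℝ))) :=
      tendsto_const_nhds.sub (tendsto_finset_sum _ fun k hk => hp0 k (Finset.ne_of_mem_erase hk))
    simp only [Finset.sum_const, smul_zero, sub_zero] at h2
    exact h2.congr fun β => (hsum β).symm
  -- the key entrywise statement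
  have key : ∀ a b : Fin d,
      Tendsto (fun β : ℝ => (1 / β) * hessianEntry (ℓ β) z a b) atTop
        (nhds (hessianEntry (s kstar) z a b - hessianEntry (s j) z a b)) := by
    intro a b
    have hDbk : ∀ k : Fin n, HasFDerivAt (fun w => fderiv ℝ (s k) w (EuclideanSpace.single b 1))
        (fderiv ℝ (fun w => fderiv ℝ (s k) w (EuclideanSpace.single b 1)) z) z := by
      intro k
      have h1 : Differentiable ℝ (fderiv ℝ (s k)) :=
        ((hs k).fderiv_right (m := 1) (by norm_num)).differentiable (by norm_num)
      exact ((h1 z).clm_apply (differentiableAt_const _)).hasFDerivAt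
    have hHk : ∀ k : Fin n, fderiv ℝ (fun w => fderiv ℝ (s k) w (EuclideanSpace.single b 1)) z
        (EuclideanSpace.single a 1) = hessianEntry (s k) z a b := fun k => rfl
    -- explicit Hessian formula
    have hform : ∀ β : ℝ, hessianEntry (ℓ β) z a b
        = β * ((∑ k, (Real.exp (β * s k z) / ∑ i, Real.exp (β * s i z)) * hessianEntry (s k) z a b)
                - hessianEntry (s j) z a b)
          + β^2 * ((∑ k, (Real.exp (β * s k z) / ∑ i, Real.exp (β * s i z)) *
                      (fderiv ℝ (s k) z (EuclideanSpace.single a 1) * fderiv ℝ (s k) z (EuclideanSpace.single b 1)))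
              - (∑ k, (Real.exp (β * s k z) / ∑ i, Real.exp (β * s i z)) * fderiv ℝ (s k) z (EuclideanSpace.single a 1))
                * (∑ k, (Real.exp (β * s k z) / ∑ i, Real.exp (β * s i z)) * fderiv ℝ (s k) z (EuclideanSpace.single b 1))) := by
      intro β
      have hcoef : ∀ k : Fin n, HasFDerivAt (fun w => Real.exp (β * s k w) * β)
          (β • ((Real.exp (β * s k z) * β) • fderiv ℝ (s k) z)) z :=
        fun k => (hterm β z k).mul_const β
      have hprod : ∀ k : Fin n, HasFDerivAt
          (fun w => (Real.exp (β * s k w) * β) * fderiv ℝ (s k) w (EuclideanSpace.single b 1))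
          ((Real.exp (β * s k z) * β) • (fderiv ℝ (fun w => fderiv ℝ (s k) w (EuclideanSpace.single b 1)) z)
            + (fderiv ℝ (s k) z (EuclideanSpace.single b 1)) • (β • ((Real.exp (β * s k z) * β) • fderiv ℝ (s k) z))) z :=
        fun k => (hcoef k).mul (hDbk k)
      have hB := HasFDerivAt.fun_sum (fun k (_ : k ∈ Finset.univ) => hprod k)
      have hA : HasFDerivAt (fun w => (∑ k, Real.exp (β * s k w))⁻¹)
          ((-((∑ k, Real.exp (β * s k z)) ^ 2)⁻¹) • (∑ k, (Real.exp (β * s k z) * β) • fderiv ℝ (s k) z)) z :=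
        (hasDerivAt_inv (ne_of_gt (hgpos β z))).comp_hasFDerivAt z (hgsum β z)
      have hAB := hA.fun_mul hB
      have hjz := (hDbk j).const_mul β
      have hAll := hAB.fun_sub hjz
      have hfun : (fun w => fderiv ℝ (ℓ β) w (EuclideanSpace.single b 1))
          = fun w => ((∑ k, Real.exp (β * s k w))⁻¹) *
              (∑ k, (Real.exp (β * s k w) * β) * fderiv ℝ (s k) w (EuclideanSpace.single b 1))
            - β * (fderiv ℝ (s j) w (EuclideanSpace.single b 1)) := funext fun w => hgrad β w b
      have hentry : hessianEntry (ℓ β) z a b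
          = fderiv ℝ (fun w => fderiv ℝ (ℓ β) w (EuclideanSpace.single b 1)) z (EuclideanSpace.single a 1) := rfl
      rw [hentry, hfun, hAll.fderiv]
      simp only [ContinuousLinearMap.sub_apply, ContinuousLinearMap.add_apply,
        ContinuousLinearMap.smul_apply, ContinuousLinearMap.coe_sum', Finset.sum_apply,
        smul_eq_mul, hHk]
      have hG : (∑ k : Fin n, Real.exp (β * s k z)) ≠ 0 := (hgpos β z).ne'
      have e1 : ∑ x : Fin n, (Real.exp (β * s x z) * β * hessianEntry (s x) z a b +
            fderiv ℝ (s x) z (EuclideanSpace.single b 1) *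
              (β * (Real.exp (β * s x z) * β * fderiv ℝ (s x) z (EuclideanSpace.single a 1))))
          = β * (∑ k, Real.exp (β * s k z) * hessianEntry (s k) z a b)
            + β^2 * (∑ k, Real.exp (β * s k z) *
                (fderiv ℝ (s k) z (EuclideanSpace.single a 1) * fderiv ℝ (s k) z (EuclideanSpace.single b 1))) := by
        rw [Finset.sum_add_distrib, Finset.mul_sum, Finset.mul_sum]
        congr 1
        · exact Finset.sum_congr rfl fun k _ => by ring
        · exact Finset.sum_congr rfl fun k _ => by ring
      have e2 : ∀ f : Fin n → ℝ, ∑ k : Fin n, Real.exp (β * s k z) * β * f k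
          = β * ∑ k, Real.exp (β * s k z) * f k := by
        intro f; rw [Finset.mul_sum]; exact Finset.sum_congr rfl fun k _ => by ring
      have e3 : ∀ f : Fin n → ℝ, ∑ k : Fin n, (Real.exp (β * s k z) / ∑ i, Real.exp (β * s i z)) * f k
          = (∑ k, Real.exp (β * s k z) * f k) / (∑ i, Real.exp (β * s i z)) := by
        intro f; rw [Finset.sum_div]; exact Finset.sum_congr rfl fun k _ => by ring
      rw [e1, e2 (fun k => fderiv ℝ (s k) z (EuclideanSpace.single b 1)),
          e2 (fun k => fderiv ℝ (s k) z (EuclideanSpace.single a 1)),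
          e3 (fun k => hessianEntry (s k) z a b),
          e3 (fun k => fderiv ℝ (s k) z (EuclideanSpace.single a 1) * fderiv ℝ (s k) z (EuclideanSpace.single b 1)),
          e3 (fun k => fderiv ℝ (s k) z (EuclideanSpace.single a 1)),
          e3 (fun k => fderiv ℝ (s k) z (EuclideanSpace.single b 1))]
      set G := ∑ i : Fin n, Real.exp (β * s i z) with hGdef
      set Sh := ∑ k : Fin n, Real.exp (β * s k z) * hessianEntry (s k) z a b with hSh
      set Suv := ∑ k : Fin n, Real.exp (β * s k z) *
          (fderiv ℝ (s k) z (EuclideanSpace.single a 1) * fderiv ℝ (s k) z (EuclideanSpace.single b 1)) with hSuv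
      set Su := ∑ k : Fin n, Real.exp (β * s k z) * fderiv ℝ (s k) z (EuclideanSpace.single a 1) with hSu
      set Sv := ∑ k : Fin n, Real.exp (β * s k z) * fderiv ℝ (s k) z (EuclideanSpace.single b 1) with hSv
      clear_value Sh Suv Su Sv
      clear e1 e2 e3 hAll hAB hB hA hprod hcoef hDbk hjz hfun hentry hHk hSh hSuv hSu hSv
        hgrad hgsum hterm hgpos hs hℓ hD1 hnd hne hbp hp0 hPsum hpstar hks
      field_simp
      ring
    -- limits of the four pieces
    have T1 : Tendsto (fun β : ℝ => ∑ k, (Real.exp (β * s k z) / ∑ i, Real.exp (β * s i z)) *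
          hessianEntry (s k) z a b) atTop
        (nhds (∑ k, (if k = kstar then hessianEntry (s kstar) z a b else 0))) := by
      refine tendsto_finset_sum _ fun k _ => ?_
      by_cases h : k = kstar
      · subst h
        simpa using hpstar.mul_const (hessianEntry (s k) z a b)
      · simpa [h] using (hp0 k h).mul_const (hessianEntry (s k) z a b)
    have hT1sum : (∑ k, (if k = kstar then hessianEntry (s kstar) z a b else 0))
        = hessianEntry (s kstar) z a b := by
      rw [Finset.sum_ite_eq' Finset.univ kstar]
      simp
    rw [hT1sum] at T1
    have T2 : Tendsto (fun β : ℝ => ∑ k, (β * (Real.exp (β * s k z) / ∑ i, Real.exp (β * s i z))) *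
          ((fderiv ℝ (s k) z (EuclideanSpace.single a 1) - fderiv ℝ (s kstar) z (EuclideanSpace.single a 1))
            * (fderiv ℝ (s k) z (EuclideanSpace.single b 1) - fderiv ℝ (s kstar) z (EuclideanSpace.single b 1))))
        atTop (nhds (∑ _k : Fin n, (0:ℝ))) := by
      refine tendsto_finset_sum _ fun k _ => ?_
      by_cases h : k = kstar
      · subst h
        simp only [sub_self, zero_mul, mul_zero]
        exact tendsto_const_nhds
      · simpa using (hbp k h).mul_const
          ((fderiv ℝ (s k) z (EuclideanSpace.single a 1) - fderiv ℝ (s kstar) z (EuclideanSpace.single a 1))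
            * (fderiv ℝ (s k) z (EuclideanSpace.single b 1) - fderiv ℝ (s kstar) z (EuclideanSpace.single b 1)))
    have T3 : Tendsto (fun β : ℝ => ∑ k, (β * (Real.exp (β * s k z) / ∑ i, Real.exp (β * s i z))) *
          (fderiv ℝ (s k) z (EuclideanSpace.single a 1) - fderiv ℝ (s kstar) z (EuclideanSpace.single a 1)))
        atTop (nhds (∑ _k : Fin n, (0:ℝ))) := by
      refine tendsto_finset_sum _ fun k _ => ?_
      by_cases h : k = kstar
      · subst h
        simp only [sub_self, mul_zero]
        exact tendsto_const_nhds
      · simpa using (hbp k h).mul_const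
          (fderiv ℝ (s k) z (EuclideanSpace.single a 1) - fderiv ℝ (s kstar) z (EuclideanSpace.single a 1))
    have T4 : Tendsto (fun β : ℝ => ∑ k, (Real.exp (β * s k z) / ∑ i, Real.exp (β * s i z)) *
          (fderiv ℝ (s k) z (EuclideanSpace.single b 1) - fderiv ℝ (s kstar) z (EuclideanSpace.single b 1)))
        atTop (nhds (∑ _k : Fin n, (0:ℝ))) := by
      refine tendsto_finset_sum _ fun k _ => ?_
      by_cases h : k = kstar
      · subst h
        simp only [sub_self, mul_zero]
        exact tendsto_const_nhds
      · simpa using (hp0 k h).mul_const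
          (fderiv ℝ (s k) z (EuclideanSpace.single b 1) - fderiv ℝ (s kstar) z (EuclideanSpace.single b 1))
    simp only [Finset.sum_const, smul_zero] at T2 T3 T4
    have hmain := (T1.sub_const (hessianEntry (s j) z a b)).add (T2.sub (T3.mul T4))
    rw [mul_zero, sub_zero, add_zero] at hmain
    refine hmain.congr' ?_
    filter_upwards [eventually_gt_atTop (0:ℝ)] with β hβ
    rw [hform β]
    -- covariance identity
    have t1 : ∑ k, (Real.exp (β * s k z) / ∑ i, Real.exp (β * s i z)) *
          ((fderiv ℝ (s k) z (EuclideanSpace.single a 1) - fderiv ℝ (s kstar) z (EuclideanSpace.single a 1))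
            * (fderiv ℝ (s k) z (EuclideanSpace.single b 1) - fderiv ℝ (s kstar) z (EuclideanSpace.single b 1)))
        = (∑ k, (Real.exp (β * s k z) / ∑ i, Real.exp (β * s i z)) *
              (fderiv ℝ (s k) z (EuclideanSpace.single a 1) * fderiv ℝ (s k) z (EuclideanSpace.single b 1)))
          - fderiv ℝ (s kstar) z (EuclideanSpace.single a 1) *
              (∑ k, (Real.exp (β * s k z) / ∑ i, Real.exp (β * s i z)) * fderiv ℝ (s k) z (EuclideanSpace.single b 1))
          - fderiv ℝ (s kstar) z (EuclideanSpace.single b 1) *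
              (∑ k, (Real.exp (β * s k z) / ∑ i, Real.exp (β * s i z)) * fderiv ℝ (s k) z (EuclideanSpace.single a 1))
          + (fderiv ℝ (s kstar) z (EuclideanSpace.single a 1) * fderiv ℝ (s kstar) z (EuclideanSpace.single b 1)) *
              (∑ k, Real.exp (β * s k z) / ∑ i, Real.exp (β * s i z)) := by
      rw [show (∑ k, (Real.exp (β * s k z) / ∑ i, Real.exp (β * s i z)) *
          ((fderiv ℝ (s k) z (EuclideanSpace.single a 1) - fderiv ℝ (s kstar) z (EuclideanSpace.single a 1))
            * (fderiv ℝ (s k) z (EuclideanSpace.single b 1) - fderiv ℝ (s kstar) z (EuclideanSpace.single b 1))))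
        = ∑ k, ((Real.exp (β * s k z) / ∑ i, Real.exp (β * s i z)) *
              (fderiv ℝ (s k) z (EuclideanSpace.single a 1) * fderiv ℝ (s k) z (EuclideanSpace.single b 1))
            - fderiv ℝ (s kstar) z (EuclideanSpace.single a 1) *
                ((Real.exp (β * s k z) / ∑ i, Real.exp (β * s i z)) * fderiv ℝ (s k) z (EuclideanSpace.single b 1))
            - fderiv ℝ (s kstar) z (EuclideanSpace.single b 1) *
                ((Real.exp (β * s k z) / ∑ i, Real.exp (β * s i z)) * fderiv ℝ (s k) z (EuclideanSpace.single a 1))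
            + (fderiv ℝ (s kstar) z (EuclideanSpace.single a 1) * fderiv ℝ (s kstar) z (EuclideanSpace.single b 1)) *
                (Real.exp (β * s k z) / ∑ i, Real.exp (β * s i z)))
        from Finset.sum_congr rfl fun k _ => by ring]
      rw [Finset.sum_add_distrib, Finset.sum_sub_distrib, Finset.sum_sub_distrib,
        ← Finset.mul_sum, ← Finset.mul_sum, ← Finset.mul_sum]
    have t2 : ∑ k, (β * (Real.exp (β * s k z) / ∑ i, Real.exp (β * s i z))) *
          (fderiv ℝ (s k) z (EuclideanSpace.single a 1) - fderiv ℝ (s kstar) z (EuclideanSpace.single a 1))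
        = β * ((∑ k, (Real.exp (β * s k z) / ∑ i, Real.exp (β * s i z)) * fderiv ℝ (s k) z (EuclideanSpace.single a 1))
            - fderiv ℝ (s kstar) z (EuclideanSpace.single a 1) * (∑ k, Real.exp (β * s k z) / ∑ i, Real.exp (β * s i z))) := by
      rw [show (∑ k, (β * (Real.exp (β * s k z) / ∑ i, Real.exp (β * s i z))) *
          (fderiv ℝ (s k) z (EuclideanSpace.single a 1) - fderiv ℝ (s kstar) z (EuclideanSpace.single a 1)))
        = ∑ k, (β * ((Real.exp (β * s k z) / ∑ i, Real.exp (β * s i z)) * fderiv ℝ (s k) z (EuclideanSpace.single a 1))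
            - (fderiv ℝ (s kstar) z (EuclideanSpace.single a 1) * β) * (Real.exp (β * s k z) / ∑ i, Real.exp (β * s i z)))
        from Finset.sum_congr rfl fun k _ => by ring]
      rw [Finset.sum_sub_distrib, ← Finset.mul_sum, ← Finset.mul_sum]
      ring
    have t3 : ∑ k, (Real.exp (β * s k z) / ∑ i, Real.exp (β * s i z)) *
          (fderiv ℝ (s k) z (EuclideanSpace.single b 1) - fderiv ℝ (s kstar) z (EuclideanSpace.single b 1))
        = (∑ k, (Real.exp (β * s k z) / ∑ i, Real.exp (β * s i z)) * fderiv ℝ (s k) z (EuclideanSpace.single b 1))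
          - fderiv ℝ (s kstar) z (EuclideanSpace.single b 1) * (∑ k, Real.exp (β * s k z) / ∑ i, Real.exp (β * s i z)) := by
      rw [show (∑ k, (Real.exp (β * s k z) / ∑ i, Real.exp (β * s i z)) *
          (fderiv ℝ (s k) z (EuclideanSpace.single b 1) - fderiv ℝ (s kstar) z (EuclideanSpace.single b 1)))
        = ∑ k, ((Real.exp (β * s k z) / ∑ i, Real.exp (β * s i z)) * fderiv ℝ (s k) z (EuclideanSpace.single b 1)
            - fderiv ℝ (s kstar) z (EuclideanSpace.single b 1) * (Real.exp (β * s k z) / ∑ i, Real.exp (β * s i z)))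
        from Finset.sum_congr rfl fun k _ => by ring]
      rw [Finset.sum_sub_distrib, ← Finset.mul_sum]
    have t4 : ∑ k, (β * (Real.exp (β * s k z) / ∑ i, Real.exp (β * s i z))) *
          ((fderiv ℝ (s k) z (EuclideanSpace.single a 1) - fderiv ℝ (s kstar) z (EuclideanSpace.single a 1))
            * (fderiv ℝ (s k) z (EuclideanSpace.single b 1) - fderiv ℝ (s kstar) z (EuclideanSpace.single b 1)))
        = β * ∑ k, (Real.exp (β * s k z) / ∑ i, Real.exp (β * s i z)) *
            ((fderiv ℝ (s k) z (EuclideanSpace.single a 1) - fderiv ℝ (s kstar) z (EuclideanSpace.single a 1))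
              * (fderiv ℝ (s k) z (EuclideanSpace.single b 1) - fderiv ℝ (s kstar) z (EuclideanSpace.single b 1))) := by
      rw [Finset.mul_sum]
      exact Finset.sum_congr rfl fun k _ => by ring
    rw [t4, t2, t1, t3, hPsum β]
    clear hmain T1 T2 T3 T4 t1 t2 t3 t4 hform hHk hDbk hbp hp0 hpstar hPsum hgrad hD1 hgsum
      hterm hne hgpos hnd hs hℓ hks hT1sum
    set PH := ∑ k, (Real.exp (β * s k z) / ∑ i, Real.exp (β * s i z)) * hessianEntry (s k) z a b
    set Puv := ∑ k, (Real.exp (β * s k z) / ∑ i, Real.exp (β * s i z)) *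
        (fderiv ℝ (s k) z (EuclideanSpace.single a 1) * fderiv ℝ (s k) z (EuclideanSpace.single b 1))
    set Pu := ∑ k, (Real.exp (β * s k z) / ∑ i, Real.exp (β * s i z)) * fderiv ℝ (s k) z (EuclideanSpace.single a 1)
    set Pv := ∑ k, (Real.exp (β * s k z) / ∑ i, Real.exp (β * s i z)) * fderiv ℝ (s k) z (EuclideanSpace.single b 1)
    clear_value PH Puv Pu Pv
    have hβ0 : β ≠ 0 := hβ.ne'
    generalize hessianEntry (s j) z a b = HJ
    generalize fderiv ℝ (s kstar) z (EuclideanSpace.single a 1) = US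
    generalize fderiv ℝ (s kstar) z (EuclideanSpace.single b 1) = VS
    field_simp
    ring
  refine ⟨key, fun hne2 => ?_⟩
  have hmat : Tendsto (fun β : ℝ => (1/β) • hessianMatrix (ℓ β) z) atTop
      (nhds (hessianMatrix (s kstar) z - hessianMatrix (s j) z)) := by
    refine tendsto_pi_nhds.mpr ?_
    intro a
    rw [tendsto_pi_nhds]
    intro b
    simpa [hessianMatrix, Matrix.sub_apply, Matrix.smul_apply, smul_eq_mul,
      hessianEntry] using key a b
  have hnormt : Tendsto (fun β : ℝ => ‖(1/β) • hessianMatrix (ℓ β) z‖) atTop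
      (nhds ‖hessianMatrix (s kstar) z - hessianMatrix (s j) z‖) :=
    (continuous_norm.tendsto _).comp hmat
  constructor
  · refine hnormt.congr' ?_
    filter_upwards [eventually_gt_atTop (0:ℝ)] with β hβ
    rw [norm_smul, Real.norm_eq_abs, abs_of_pos (by positivity), one_div, inv_mul_eq_div]
  · exact norm_pos_iff.mpr (sub_ne_zero.mpr hne2)
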